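/- Diagonal transfer function criterion (the computation underlying equations (30)–(34)). Let M ∈ ℝ^{n×n}, B̂ ∈ ℝ^{n×p}, C ∈ ℝ^{p×n}, and let d₁, …, d_p be positive integers such that for each i ∈ {1,…,p}: C_i M^k B̂ = 0 for all 0 ≤ k < d_i − 1, C_i M^{d_i−1} B̂ = e_iᵀ (the i-th standard basis row vector of ℝ^{1×p}), and C_i M^{d_i} = 0. Then over ℝ(s) the transfer function C (sI − M)⁻¹ B̂ equals the diagonal matrix diag(s^{−d_1}, …, s^{−d_p}). -/

import Mathlib

noncomputable section
open Matrix

/-- Entrywise embedding of a real matrix into matrices over the field ℝ(s). -/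
noncomputable def toRat {k l : ℕ} (M : Matrix (Fin k) (Fin l) ℝ) :
    Matrix (Fin k) (Fin l) (RatFunc ℝ) :=
  M.map (algebraMap ℝ (RatFunc ℝ))

/-- The matrix `s I - M` over ℝ(s). -/
noncomputable def sIm {k : ℕ} (M : Matrix (Fin k) (Fin k) ℝ) :
    Matrix (Fin k) (Fin k) (RatFunc ℝ) :=
  Matrix.scalar (Fin k) (RatFunc.X : RatFunc ℝ) - toRat M

/-- `sIm M` is the charmatrix mapped into ℝ(s). -/
lemma sIm_eq_charmatrix_map {k : ℕ} (M : Matrix (Fin k) (Fin k) ℝ) :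
    sIm M = (charmatrix M).map (algebraMap (Polynomial ℝ) (RatFunc ℝ)) := by
  ext i j
  simp [sIm, toRat, charmatrix, Matrix.sub_apply, Matrix.map_apply, Matrix.scalar_apply,
    Matrix.diagonal_apply, apply_ite (algebraMap (Polynomial ℝ) (RatFunc ℝ)),
    IsScalarTower.algebraMap_apply ℝ (Polynomial ℝ) (RatFunc ℝ)]

lemma isUnit_det_sIm {k : ℕ} (M : Matrix (Fin k) (Fin k) ℝ) :
    IsUnit (sIm M).det := by
  rw [sIm_eq_charmatrix_map,
    show (charmatrix M).map (algebraMap (Polynomial ℝ) (RatFunc ℝ))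
      = (algebraMap (Polynomial ℝ) (RatFunc ℝ)).mapMatrix (charmatrix M) from rfl,
    ← RingHom.map_det]
  refine isUnit_iff_ne_zero.mpr fun h => ?_
  exact (Matrix.charpoly_monic M).ne_zero
    ((map_eq_zero_iff _ (RatFunc.algebraMap_injective ℝ)).mp h)

/-- Diagonal transfer function criterion (the computation underlying equations
(30)–(34)): if for each `i`, `Cᵢ M^k B̂ = 0` for `0 ≤ k < dᵢ - 1`,
`Cᵢ M^{dᵢ-1} B̂ = eᵢᵀ`, and `Cᵢ M^{dᵢ} = 0`, then
`C (sI - M)⁻¹ B̂ = diag (s^{-d 1}, …, s^{-d p})`. -/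
theorem diagonal_transfer_function_criterion
    (n p : ℕ) (M : Matrix (Fin n) (Fin n) ℝ) (Bhat : Matrix (Fin n) (Fin p) ℝ)
    (C : Matrix (Fin p) (Fin n) ℝ) (d : Fin p → ℕ) (hd1 : ∀ i, 1 ≤ d i)
    (hzero : ∀ i : Fin p, ∀ k : ℕ, k < d i - 1 →
      (fun j => (C * M ^ k * Bhat) i j) = 0)
    (hone : ∀ i : Fin p,
      (fun j => (C * M ^ (d i - 1) * Bhat) i j) = fun j => if j = i then (1 : ℝ) else 0)
    (hend : ∀ i : Fin p, (fun l => (C * M ^ (d i)) i l) = 0) :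
    toRat C * (sIm M)⁻¹ * toRat Bhat =
      Matrix.diagonal fun i => ((RatFunc.X : RatFunc ℝ) ^ d i)⁻¹ := by
  classical
  set X : RatFunc ℝ := RatFunc.X with hX
  have hXne : X ≠ 0 := RatFunc.X_ne_zero
  set alg := algebraMap ℝ (RatFunc ℝ) with halg
  set N : Matrix (Fin p) (Fin n) (RatFunc ℝ) :=
    Matrix.of fun i j => ∑ k ∈ Finset.range (d i), (X ^ (k + 1))⁻¹ * alg ((C * M ^ k) i j)
    with hN
  have hstep : ∀ k : ℕ, (X ^ (k + 1))⁻¹ * X = (X ^ k)⁻¹ := by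
    intro k
    rw [pow_succ, mul_inv, mul_assoc, inv_mul_cancel₀ hXne, mul_one]
  have hNM : ∀ i j, (N * toRat M) i j
      = ∑ k ∈ Finset.range (d i), (X ^ (k + 1))⁻¹ * alg ((C * M ^ (k + 1)) i j) := by
    intro i j
    rw [Matrix.mul_apply]
    simp only [hN, Matrix.of_apply, toRat, Matrix.map_apply, Finset.sum_mul]
    rw [Finset.sum_comm]
    refine Finset.sum_congr rfl fun k _ => ?_
    have hCM : (C * M ^ (k + 1)) i j = ∑ l, (C * M ^ k) i l * M l j := by
      rw [pow_succ, ← Matrix.mul_assoc, Matrix.mul_apply]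
    rw [hCM, map_sum, Finset.mul_sum]
    exact Finset.sum_congr rfl fun l _ => by rw [_root_.map_mul, mul_assoc]
  have hNs : N * sIm M = toRat C := by
    ext i j
    have hend' : (C * M ^ d i) i j = 0 := congrFun (hend i) j
    have h1 : (N * sIm M) i j = N i j * X - (N * toRat M) i j := by
      rw [Matrix.mul_apply, Matrix.mul_apply]
      simp only [sIm, Matrix.sub_apply, Matrix.scalar_apply, Matrix.diagonal_apply,
        mul_sub, Finset.sum_sub_distrib]
      congr 1
      simp [mul_ite, hX]
    have hXN : N i j * X = ∑ k ∈ Finset.range (d i), (X ^ k)⁻¹ * alg ((C * M ^ k) i j) := by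
      simp only [hN, Matrix.of_apply, Finset.sum_mul]
      exact Finset.sum_congr rfl fun k _ => by rw [mul_right_comm, hstep]
    rw [h1, hXN, hNM, ← Finset.sum_sub_distrib,
      Finset.sum_range_sub' (fun k => (X ^ k)⁻¹ * alg ((C * M ^ k) i j)) (d i)]
    simp [toRat, hend', halg, RatFunc.algebraMap_eq_C]
  have hCinv : toRat C * (sIm M)⁻¹ = N := by
    calc toRat C * (sIm M)⁻¹ = N * sIm M * (sIm M)⁻¹ := by rw [hNs]
      _ = N * (sIm M * (sIm M)⁻¹) := by rw [Matrix.mul_assoc]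
      _ = N := by rw [Matrix.mul_nonsing_inv _ (isUnit_det_sIm M), Matrix.mul_one]
  rw [hCinv]
  ext i j
  rw [Matrix.mul_apply]
  have hsum : ∑ l, N i l * toRat Bhat l j
      = ∑ k ∈ Finset.range (d i), (X ^ (k + 1))⁻¹ * alg ((C * M ^ k * Bhat) i j) := by
    simp only [hN, Matrix.of_apply, toRat, Matrix.map_apply, Finset.sum_mul]
    rw [Finset.sum_comm]
    refine Finset.sum_congr rfl fun k _ => ?_
    rw [Matrix.mul_apply, map_sum, Finset.mul_sum]
    exact Finset.sum_congr rfl fun l _ => by rw [_root_.map_mul, mul_assoc]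
  rw [hsum, Finset.sum_eq_single (d i - 1)]
  · have h1 : d i - 1 + 1 = d i := Nat.succ_pred_eq_of_pos (hd1 i)
    rw [h1, congrFun (hone i) j]
    by_cases hji : j = i
    · subst hji
      simp
    · simp [hji, Matrix.diagonal_apply_ne' _ hji]
  · intro k hk hne
    have hk' : k < d i - 1 := by
      have := Finset.mem_range.mp hk; omega
    have := congrFun (hzero i k hk') j
    simp only [Pi.zero_apply] at this
    simp [this]
  · intro h
    have := hd1 i
    exact absurd (Finset.mem_range.mpr (by omega)) h
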